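/- arXiv:1602.03992 — 8 statements merged into one kernel-verified Lean document; each statement's English description precedes it below -/
import Mathlib

section
/- Let 0 < p ≤ 1 and 0 < ε. For every x₀ ∈ ℝ, every ρ ≥ 0, and every x ∈ ℝ, the smoothed ℓ₀ surrogate satisfies the quadratic majorization ρ·g_p^ε(x) ≤ ρ·g_p^ε(x₀) + w(x₀; ρ)·(x² − x₀²), with equality when x = x₀. -/
/-- The smoothed ℓ₀ surrogate `g_p^ε`. -/
noncomputable def gpe (p ε x : ℝ) : ℝ :=
  if |x| ≤ ε then x ^ 2 / (2 * ε * (p + ε) * Real.log (1 + 1 / p))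
  else (Real.log ((p + |x|) / (p + ε)) + ε / (2 * (p + ε))) / Real.log (1 + 1 / p)

/-- The majorization weight `w(x₀; ρ)`. -/
noncomputable def wgt (p ε ρ x₀ : ℝ) : ℝ :=
  if |x₀| ≤ ε then ρ / (2 * ε * (p + ε) * Real.log (1 + 1 / p))
  else ρ / (2 * Real.log (1 + 1 / p) * |x₀| * (|x₀| + p))

lemma log_upper (p ε t : ℝ) (hp : 0 < p) (hε : 0 < ε) (ht : -p < t) :
    Real.log ((p + t) / (p + ε)) ≤ (t - ε) / (p + ε) := by
  have h1 : 0 < p + t := by linarith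
  have h2 : 0 < p + ε := by linarith
  have h := Real.log_le_sub_one_of_pos (show 0 < (p + t) / (p + ε) by positivity)
  have he : (p + t) / (p + ε) - 1 = (t - ε) / (p + ε) := by field_simp; ring
  linarith [he ▸ h]

lemma log_lower (p ε s : ℝ) (hp : 0 < p) (hε : 0 < ε) (hs : -p < s) :
    (s - ε) / (p + s) ≤ Real.log ((p + s) / (p + ε)) := by
  have h1 : 0 < p + s := by linarith
  have h2 : 0 < p + ε := by linarith
  have h := Real.log_le_sub_one_of_pos (show 0 < (p + ε) / (p + s) by positivity)
  have hle : Real.log ((p + ε) / (p + s)) = - Real.log ((p + s) / (p + ε)) := by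
    rw [← Real.log_inv]
    congr 1
    field_simp
  have he : (p + ε) / (p + s) - 1 = -((s - ε) / (p + s)) := by
    field_simp
    ring
  rw [hle, he] at h
  linarith

lemma caseB (p ε t : ℝ) (hp : 0 < p) (hε : 0 < ε) (ht : ε < t) :
    Real.log ((p + t) / (p + ε)) + ε / (2 * (p + ε)) ≤ t ^ 2 / (2 * ε * (p + ε)) := by
  have hlog := log_upper p ε t hp hε (by linarith)
  have h2 : (0:ℝ) < p + ε := by linarith
  have key : (t - ε) / (p + ε) + ε / (2 * (p + ε)) ≤ t ^ 2 / (2 * ε * (p + ε)) := by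
    rw [div_add_div _ _ (by positivity) (by positivity),
      div_le_div_iff₀ (by positivity) (by positivity)]
    nlinarith [mul_nonneg (sq_nonneg (t - ε)) (sq_nonneg (p + ε)), sq_nonneg (p + ε)]
  linarith

lemma caseC (p ε s t : ℝ) (hp : 0 < p) (hε : 0 < ε) (hs : ε < s) (ht : t ≤ ε) (ht0 : 0 ≤ t) :
    t ^ 2 / (2 * ε * (p + ε)) ≤ Real.log ((p + s) / (p + ε)) + ε / (2 * (p + ε))
      + (t ^ 2 - s ^ 2) / (2 * s * (s + p)) := by
  have hlog := log_lower p ε s hp hε (by linarith)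
  have h2 : (0:ℝ) < p + ε := by linarith
  have hs0 : (0:ℝ) < s := by linarith
  have hsp : (0:ℝ) < s + p := by linarith
  have hte : t ^ 2 ≤ ε ^ 2 := by nlinarith
  have hmon : ε * (p + ε) ≤ s * (p + s) := by nlinarith
  have hclean : t ^ 2 * (s * (p + s)) ≤
      ε * (2 * s * (s - ε) * (p + ε) + s * (p + s) * ε + (p + ε) * (t ^ 2 - s ^ 2)) := by
    nlinarith [mul_nonneg (mul_nonneg hε.le h2.le) (sq_nonneg (s - ε)),
      mul_nonneg (sub_nonneg.2 hte) (sub_nonneg.2 hmon)]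
  have key : t ^ 2 / (2 * ε * (p + ε)) ≤ (s - ε) / (p + s) + ε / (2 * (p + ε))
      + (t ^ 2 - s ^ 2) / (2 * s * (s + p)) := by
    rw [div_add_div _ _ (by positivity) (by positivity),
      div_add_div _ _ (by positivity) (by positivity),
      div_le_div_iff₀ (by positivity) (by positivity)]
    nlinarith [mul_le_mul_of_nonneg_left hclean
      (by positivity : (0:ℝ) ≤ 4 * (p + ε) * (p + s))]
  linarith

lemma caseD (p ε s t : ℝ) (hp : 0 < p) (hε : 0 < ε) (hs : ε < s) (ht : ε < t) :
    Real.log ((p + t) / (p + ε)) ≤ Real.log ((p + s) / (p + ε))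
      + (t ^ 2 - s ^ 2) / (2 * s * (s + p)) := by
  have hs0 : (0:ℝ) < s := by linarith
  have hsp : (0:ℝ) < s + p := by linarith
  have hps : (0:ℝ) < p + s := by linarith
  have hpt : (0:ℝ) < p + t := by linarith
  have h2 : (0:ℝ) < p + ε := by linarith
  have hdiff : Real.log ((p + t) / (p + ε)) - Real.log ((p + s) / (p + ε))
      = Real.log ((p + t) / (p + s)) := by
    rw [Real.log_div (by positivity) (by positivity), Real.log_div (by positivity) (by positivity),
      Real.log_div (by positivity) (by positivity)]
    ring
  have hlog := Real.log_le_sub_one_of_pos (show 0 < (p + t) / (p + s) by positivity)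
  have he : (p + t) / (p + s) - 1 = (t - s) / (p + s) := by field_simp; ring
  rw [he] at hlog
  have key : (t - s) / (p + s) ≤ (t ^ 2 - s ^ 2) / (2 * s * (s + p)) := by
    rw [div_le_div_iff₀ (by positivity) (by positivity)]
    nlinarith [sq_nonneg (t - s)]
  linarith [hdiff, hlog, key]

theorem stmt0 (p ε : ℝ) (hp : 0 < p) (hp1 : p ≤ 1) (hε : 0 < ε)
    (x₀ ρ : ℝ) (hρ : 0 ≤ ρ) (x : ℝ) :
    ρ * gpe p ε x ≤ ρ * gpe p ε x₀ + wgt p ε ρ x₀ * (x ^ 2 - x₀ ^ 2) ∧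
    ρ * gpe p ε x₀ = ρ * gpe p ε x₀ + wgt p ε ρ x₀ * (x₀ ^ 2 - x₀ ^ 2) := by
  have hL : 0 < Real.log (1 + 1 / p) := Real.log_pos (by
    have : 0 < 1 / p := by positivity
    linarith)
  have h2 : (0:ℝ) < p + ε := by linarith
  constructor
  · set L := Real.log (1 + 1 / p) with hLdef
    have hρL : 0 ≤ ρ / L := by positivity
    have hL0 : L ≠ 0 := ne_of_gt hL
    have hε0 : ε ≠ 0 := ne_of_gt hε
    have h20 : p + ε ≠ 0 := ne_of_gt h2
    rw [gpe, gpe, wgt]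
    by_cases h0 : |x₀| ≤ ε <;> by_cases h1 : |x| ≤ ε <;>
      simp only [h0, h1, if_pos, if_neg, if_true, if_false]
    · -- both small : equality
      apply le_of_eq
      field_simp
      ring
    · -- |x₀| ≤ ε < |x|
      push_neg at h1
      have key := caseB p ε |x| hp hε h1
      have e1 : ρ * ((Real.log ((p + |x|) / (p + ε)) + ε / (2 * (p + ε))) / L)
          = ρ / L * (Real.log ((p + |x|) / (p + ε)) + ε / (2 * (p + ε))) := by ring
      have e2 : ρ * (x₀ ^ 2 / (2 * ε * (p + ε) * L)) + ρ / (2 * ε * (p + ε) * L) * (x ^ 2 - x₀ ^ 2)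
          = ρ / L * (x ^ 2 / (2 * ε * (p + ε))) := by
        field_simp
        ring
      rw [e1, e2, ← sq_abs x]
      exact mul_le_mul_of_nonneg_left key hρL
    · -- ε < |x₀|, |x| ≤ ε
      push_neg at h0
      have hx0 : |x₀| ≠ 0 := ne_of_gt (by linarith : (0:ℝ) < |x₀|)
      have hxp : |x₀| + p ≠ 0 := by positivity
      have key := caseC p ε |x₀| |x| hp hε h0 h1 (abs_nonneg x)
      have e1 : ρ * (x ^ 2 / (2 * ε * (p + ε) * L)) = ρ / L * (x ^ 2 / (2 * ε * (p + ε))) := by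
        field_simp
      have e2 : ρ * ((Real.log ((p + |x₀|) / (p + ε)) + ε / (2 * (p + ε))) / L)
          + ρ / (2 * L * |x₀| * (|x₀| + p)) * (x ^ 2 - x₀ ^ 2)
          = ρ / L * ((Real.log ((p + |x₀|) / (p + ε)) + ε / (2 * (p + ε)))
            + (x ^ 2 - x₀ ^ 2) / (2 * |x₀| * (|x₀| + p))) := by
        field_simp
      rw [e1, e2, ← sq_abs x, ← sq_abs x₀]
      exact mul_le_mul_of_nonneg_left key hρL
    · -- both large
      push_neg at h0 h1
      have hx0 : |x₀| ≠ 0 := ne_of_gt (by linarith : (0:ℝ) < |x₀|)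
      have hxp : |x₀| + p ≠ 0 := by positivity
      have key := caseD p ε |x₀| |x| hp hε h0 h1
      have e1 : ρ * ((Real.log ((p + |x|) / (p + ε)) + ε / (2 * (p + ε))) / L)
          = ρ / L * (Real.log ((p + |x|) / (p + ε))) + ρ / L * (ε / (2 * (p + ε))) := by ring
      have e2 : ρ * ((Real.log ((p + |x₀|) / (p + ε)) + ε / (2 * (p + ε))) / L)
          + ρ / (2 * L * |x₀| * (|x₀| + p)) * (x ^ 2 - x₀ ^ 2)
          = ρ / L * (Real.log ((p + |x₀|) / (p + ε)) + (x ^ 2 - x₀ ^ 2) / (2 * |x₀| * (|x₀| + p)))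
            + ρ / L * (ε / (2 * (p + ε))) := by
        field_simp
        ring
      rw [e1, e2, ← sq_abs x, ← sq_abs x₀]
      have h := mul_le_mul_of_nonneg_left key hρL
      linarith
  · rw [sub_self, mul_zero, add_zero]
end

section
/- Let 0 < p ≤ 1, 0 < ε, integers m ≥ q ≥ 1, nonnegative reals ρ₁,…,ρ_q, and U₀ ∈ St(m,q). Define weights w_{ij} = w((U₀)_{ij}; ρ_j), for each column j let w_max,j = max_{1≤i≤m} w_{ij}, and define the m×q matrix H by H_{ij} = (w_{ij} − w_max,j)(U₀)_{ij}. Then for every U ∈ St(m,q), Σ_{j=1}^q ρ_j Σ_{i=1}^m g_p^ε(U_{ij}) − 2·Tr(HᵀU) ≤ Σ_{j=1}^q ρ_j Σ_{i=1}^m g_p^ε((U₀)_{ij}) − 2·Tr(HᵀU₀); that is, up to an additive constant, the linear function 2·Tr(HᵀU) majorizes the penalty Σ_j ρ_j Σ_i g_p^ε(U_{ij}) on the Stiefel manifold, with equality at U = U₀. -/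
open Matrix

lemma helper2 (L p ε a b T : ℝ) (hL : 0 < L) (hp : 0 < p) (hε : 0 < ε)
    (hT : T ≤ (a - ε) / (p + ε)) :
    (T + ε / (2 * (p + ε))) / L ≤ b ^ 2 / (2 * ε * (p + ε) * L) + 1 / (2 * ε * (p + ε) * L) * (a ^ 2 - b ^ 2) := by
  have hpε : (0:ℝ) < p + ε := by linarith
  rw [← sub_nonneg]
  have hE : b ^ 2 / (2 * ε * (p + ε) * L) + 1 / (2 * ε * (p + ε) * L) * (a ^ 2 - b ^ 2)
      - (T + ε / (2 * (p + ε))) / L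
      = ((a ^ 2 / (2 * ε * (p + ε)) - ε / (2 * (p + ε))) - T) / L := by
    field_simp
    ring
  rw [hE]
  apply div_nonneg _ hL.le
  have h2 : a ^ 2 / (2 * ε * (p + ε)) - ε / (2 * (p + ε)) - (a - ε) / (p + ε)
      = (a - ε) ^ 2 / (2 * ε * (p + ε)) := by
    field_simp
    ring
  nlinarith [div_nonneg (sq_nonneg (a - ε)) (by positivity : (0:ℝ) ≤ 2 * ε * (p + ε))]

lemma helper3 (L p ε a b T : ℝ) (hL : 0 < L) (hp : 0 < p) (hε : 0 < ε)
    (ha : 0 ≤ a) (haε : a ≤ ε) (hb : ε < b)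
    (hT : (b - ε) / (p + b) ≤ T) :
    a ^ 2 / (2 * ε * (p + ε) * L)
      ≤ (T + ε / (2 * (p + ε))) / L + 1 / (2 * L * b * (b + p)) * (a ^ 2 - b ^ 2) := by
  have hpε : (0:ℝ) < p + ε := by linarith
  have hbpos : (0:ℝ) < b := lt_trans hε hb
  have hbp : (0:ℝ) < b + p := by linarith
  rw [← sub_nonneg]
  have hE : (T + ε / (2 * (p + ε))) / L + 1 / (2 * L * b * (b + p)) * (a ^ 2 - b ^ 2)
      - a ^ 2 / (2 * ε * (p + ε) * L)
      = (T + ε / (2 * (p + ε)) + (a ^ 2 - b ^ 2) / (2 * b * (b + p))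
          - a ^ 2 / (2 * ε * (p + ε))) / L := by
    field_simp
  rw [hE]
  apply div_nonneg _ hL.le
  have h2 : (b - ε) / (p + b) + ε / (2 * (p + ε)) + (a ^ 2 - b ^ 2) / (2 * b * (b + p))
      - a ^ 2 / (2 * ε * (p + ε))
      = ((ε ^ 2 - a ^ 2) * (b * (b + p) - ε * (p + ε)) + ε * (p + ε) * (b - ε) ^ 2)
        / (2 * ε * (p + ε) * b * (b + p)) := by
    field_simp
    ring
  have hF : 0 ≤ (ε ^ 2 - a ^ 2) * (b * (b + p) - ε * (p + ε)) + ε * (p + ε) * (b - ε) ^ 2 := by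
    have h1 : a ^ 2 ≤ ε ^ 2 := by nlinarith
    have h2 : ε * (p + ε) ≤ b * (b + p) := by nlinarith
    nlinarith [mul_nonneg (sub_nonneg.mpr h1) (sub_nonneg.mpr h2),
      mul_nonneg (mul_nonneg hε.le hpε.le) (sq_nonneg (b - ε))]
  nlinarith [div_nonneg hF (by positivity : (0:ℝ) ≤ 2 * ε * (p + ε) * b * (b + p))]

lemma helper4 (L p ε a b Ta Tb : ℝ) (hL : 0 < L) (hp : 0 < p) (hε : 0 < ε)
    (hb : ε < b) (hTab : Ta - Tb ≤ (a - b) / (p + b)) :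
    (Ta + ε / (2 * (p + ε))) / L
      ≤ (Tb + ε / (2 * (p + ε))) / L + 1 / (2 * L * b * (b + p)) * (a ^ 2 - b ^ 2) := by
  have hpε : (0:ℝ) < p + ε := by linarith
  have hbpos : (0:ℝ) < b := lt_trans hε hb
  have hbp : (0:ℝ) < b + p := by linarith
  rw [← sub_nonneg]
  have hE : (Tb + ε / (2 * (p + ε))) / L + 1 / (2 * L * b * (b + p)) * (a ^ 2 - b ^ 2)
      - (Ta + ε / (2 * (p + ε))) / L
      = (Tb - Ta + (a ^ 2 - b ^ 2) / (2 * b * (b + p))) / L := by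
    field_simp
    ring
  rw [hE]
  apply div_nonneg _ hL.le
  have h2 : (a ^ 2 - b ^ 2) / (2 * b * (b + p)) - (a - b) / (p + b)
      = (a - b) ^ 2 / (2 * b * (b + p)) := by
    field_simp
    ring
  nlinarith [div_nonneg (sq_nonneg (a - b)) (by positivity : (0:ℝ) ≤ 2 * b * (b + p))]

lemma key (p ε x x₀ : ℝ) (hp : 0 < p) (hε : 0 < ε) :
    gpe p ε x ≤ gpe p ε x₀ + wgt p ε 1 x₀ * (x ^ 2 - x₀ ^ 2) := by
  have hL : 0 < Real.log (1 + 1 / p) :=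
    Real.log_pos (by have := one_div_pos.mpr hp; linarith)
  have hpε : (0:ℝ) < p + ε := by linarith
  have hx2 : x ^ 2 = |x| ^ 2 := (sq_abs x).symm
  have hx02 : x₀ ^ 2 = |x₀| ^ 2 := (sq_abs x₀).symm
  unfold gpe wgt
  split_ifs with h1 h2 h2
  · -- |x| ≤ ε, |x₀| ≤ ε : equality
    have hD : (2 * ε * (p + ε) * Real.log (1 + 1 / p)) ≠ 0 := by positivity
    have : x₀ ^ 2 / (2 * ε * (p + ε) * Real.log (1 + 1 / p))
        + 1 / (2 * ε * (p + ε) * Real.log (1 + 1 / p)) * (x ^ 2 - x₀ ^ 2)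
        = x ^ 2 / (2 * ε * (p + ε) * Real.log (1 + 1 / p)) := by
      field_simp
      ring
    rw [this]
  · -- |x| ≤ ε, ε < |x₀|
    push_neg at h2
    rw [hx2, hx02]
    apply helper3 _ _ _ _ _ _ hL hp hε (abs_nonneg x) h1 h2
    have hpb : (0:ℝ) < p + |x₀| := by positivity
    have h := Real.log_le_sub_one_of_pos (show (0:ℝ) < (p + ε) / (p + |x₀|) by positivity)
    have e1 : Real.log ((p + ε) / (p + |x₀|)) = -Real.log ((p + |x₀|) / (p + ε)) := by
      rw [Real.log_div (by positivity) (by positivity), Real.log_div (by positivity) (by positivity)]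
      ring
    have e2 : (p + ε) / (p + |x₀|) - 1 = -((|x₀| - ε) / (p + |x₀|)) := by
      field_simp
      ring
    rw [e1, e2] at h
    linarith
  · -- ε < |x|, |x₀| ≤ ε
    push_neg at h1
    rw [hx2, hx02]
    apply helper2 _ _ _ _ _ _ hL hp hε
    have h := Real.log_le_sub_one_of_pos (show (0:ℝ) < (p + |x|) / (p + ε) by positivity)
    have e2 : (p + |x|) / (p + ε) - 1 = (|x| - ε) / (p + ε) := by
      field_simp
      ring
    linarith
  · -- ε < |x|, ε < |x₀|
    push_neg at h1 h2
    rw [hx2, hx02]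
    apply helper4 _ _ _ _ _ _ _ hL hp hε h2
    have hpb : (0:ℝ) < p + |x₀| := by positivity
    have hpa : (0:ℝ) < p + |x| := by positivity
    have h := Real.log_le_sub_one_of_pos (show (0:ℝ) < (p + |x|) / (p + |x₀|) by positivity)
    rw [Real.log_div (by positivity) (by positivity)] at h
    rw [Real.log_div (by positivity) (by positivity), Real.log_div (by positivity) (by positivity)]
    have e2 : (p + |x|) / (p + |x₀|) - 1 = (|x| - |x₀|) / (p + |x₀|) := by
      field_simp
      ring
    linarith

lemma wgt_smul (p ε ρ x₀ : ℝ) : wgt p ε ρ x₀ = ρ * wgt p ε 1 x₀ := by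
  unfold wgt; split_ifs <;> ring

lemma keyρ (p ε ρ x x₀ : ℝ) (hp : 0 < p) (hε : 0 < ε) (hρ : 0 ≤ ρ) :
    ρ * gpe p ε x ≤ ρ * gpe p ε x₀ + wgt p ε ρ x₀ * (x ^ 2 - x₀ ^ 2) := by
  have h := mul_le_mul_of_nonneg_left (key p ε x x₀ hp hε) hρ
  rw [wgt_smul]
  nlinarith [h]

lemma colineq (n : ℕ) (p ε ρj W : ℝ) (hp : 0 < p) (hε : 0 < ε) (hρj : 0 ≤ ρj)
    (u u₀ : Fin n → ℝ) (hu : ∑ i, u i ^ 2 = 1) (hu0 : ∑ i, u₀ i ^ 2 = 1)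
    (hW : ∀ i, wgt p ε ρj (u₀ i) ≤ W) :
    ρj * ∑ i, gpe p ε (u i) - 2 * ∑ i, (wgt p ε ρj (u₀ i) - W) * u₀ i * u i
      ≤ ρj * ∑ i, gpe p ε (u₀ i) - 2 * ∑ i, (wgt p ε ρj (u₀ i) - W) * u₀ i * u₀ i := by
  have hsum1 : ρj * ∑ i, gpe p ε (u i)
      ≤ ρj * ∑ i, gpe p ε (u₀ i) + ∑ i, wgt p ε ρj (u₀ i) * (u i ^ 2 - u₀ i ^ 2) := by
    rw [Finset.mul_sum, Finset.mul_sum, ← Finset.sum_add_distrib]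
    exact Finset.sum_le_sum fun i _ => keyρ p ε ρj (u i) (u₀ i) hp hε hρj
  have hquad : ∑ i, (wgt p ε ρj (u₀ i) * (u i ^ 2 - u₀ i ^ 2)
      - 2 * ((wgt p ε ρj (u₀ i) - W) * u₀ i * u i)
      + 2 * ((wgt p ε ρj (u₀ i) - W) * u₀ i * u₀ i)) ≤ 0 := by
    have e : ∀ i : Fin n, wgt p ε ρj (u₀ i) * (u i ^ 2 - u₀ i ^ 2)
        - 2 * ((wgt p ε ρj (u₀ i) - W) * u₀ i * u i)
        + 2 * ((wgt p ε ρj (u₀ i) - W) * u₀ i * u₀ i)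
        = (wgt p ε ρj (u₀ i) - W) * (u i - u₀ i) ^ 2 + W * (u i ^ 2 - u₀ i ^ 2) := by
      intro i; ring
    rw [Finset.sum_congr rfl fun i _ => e i, Finset.sum_add_distrib, ← Finset.mul_sum,
      Finset.sum_sub_distrib, hu, hu0, sub_self, mul_zero, add_zero]
    exact Finset.sum_nonpos fun i _ =>
      mul_nonpos_of_nonpos_of_nonneg (by linarith [hW i]) (sq_nonneg _)
  have heq : ∑ i, (wgt p ε ρj (u₀ i) * (u i ^ 2 - u₀ i ^ 2)
      - 2 * ((wgt p ε ρj (u₀ i) - W) * u₀ i * u i)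
      + 2 * ((wgt p ε ρj (u₀ i) - W) * u₀ i * u₀ i))
      = (∑ i, wgt p ε ρj (u₀ i) * (u i ^ 2 - u₀ i ^ 2))
        - 2 * ∑ i, (wgt p ε ρj (u₀ i) - W) * u₀ i * u i
        + 2 * ∑ i, (wgt p ε ρj (u₀ i) - W) * u₀ i * u₀ i := by
    rw [Finset.sum_add_distrib, Finset.sum_sub_distrib, Finset.mul_sum, Finset.mul_sum]
  linarith [heq ▸ hquad]

theorem stmt1 (p ε : ℝ) (hp : 0 < p) (hp1 : p ≤ 1) (hε : 0 < ε)
    (m q : ℕ) (hq : 1 ≤ q) (hqm : q ≤ m)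
    (ρ : Fin q → ℝ) (hρ : ∀ j, 0 ≤ ρ j)
    (U₀ : Matrix (Fin m) (Fin q) ℝ) (hU₀ : U₀ᵀ * U₀ = 1)
    (H : Matrix (Fin m) (Fin q) ℝ)
    (hH : H = Matrix.of fun i j =>
      (wgt p ε (ρ j) (U₀ i j) - ⨆ i' : Fin m, wgt p ε (ρ j) (U₀ i' j)) * U₀ i j) :
    ∀ U : Matrix (Fin m) (Fin q) ℝ, Uᵀ * U = 1 →
      (∑ j, ρ j * ∑ i, gpe p ε (U i j)) - 2 * Matrix.trace (Hᵀ * U)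
        ≤ (∑ j, ρ j * ∑ i, gpe p ε (U₀ i j)) - 2 * Matrix.trace (Hᵀ * U₀) := by
  intro U hU
  have hm : 1 ≤ m := le_trans hq hqm
  haveI : Nonempty (Fin m) := ⟨⟨0, hm⟩⟩
  subst hH
  have htr : ∀ V : Matrix (Fin m) (Fin q) ℝ,
      Matrix.trace ((Matrix.of fun i j =>
        (wgt p ε (ρ j) (U₀ i j) - ⨆ i' : Fin m, wgt p ε (ρ j) (U₀ i' j)) * U₀ i j)ᵀ * V)
      = ∑ j, ∑ i, (wgt p ε (ρ j) (U₀ i j) - ⨆ i' : Fin m, wgt p ε (ρ j) (U₀ i' j)) * U₀ i j * V i j := by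
    intro V
    simp [Matrix.trace, Matrix.diag, Matrix.mul_apply, Matrix.transpose_apply]
  have hcols : ∀ (V : Matrix (Fin m) (Fin q) ℝ), Vᵀ * V = 1 → ∀ j, ∑ i, V i j ^ 2 = 1 := by
    intro V hV j
    have h := congrFun (congrFun hV j) j
    simpa [Matrix.mul_apply, Matrix.one_apply, pow_two] using h
  rw [htr U, htr U₀]
  have hper : ∀ j : Fin q,
      ρ j * (∑ i, gpe p ε (U i j))
        - 2 * ∑ i, (wgt p ε (ρ j) (U₀ i j) - ⨆ i' : Fin m, wgt p ε (ρ j) (U₀ i' j)) * U₀ i j * U i j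
      ≤ ρ j * (∑ i, gpe p ε (U₀ i j))
        - 2 * ∑ i, (wgt p ε (ρ j) (U₀ i j) - ⨆ i' : Fin m, wgt p ε (ρ j) (U₀ i' j)) * U₀ i j * U₀ i j := by
    intro j
    exact colineq m p ε (ρ j) (⨆ i' : Fin m, wgt p ε (ρ j) (U₀ i' j)) hp hε (hρ j)
      (fun i => U i j) (fun i => U₀ i j) (hcols U hU j) (hcols U₀ hU₀ j)
      (fun i => le_ciSup (Set.Finite.bddAbove (Set.finite_range fun i' => wgt p ε (ρ j) (U₀ i' j))) i)
  have h := Finset.sum_le_sum fun j (_ : j ∈ Finset.univ) => hper j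
  rw [Finset.sum_sub_distrib, Finset.sum_sub_distrib, ← Finset.mul_sum, ← Finset.mul_sum] at h
  exact h
end

section
/- Let m ≥ q ≥ 1 and let Y be a real m×q matrix with a singular value decomposition Y = V_L Σ V_Rᵀ, where V_L ∈ St(m,q), V_R is a q×q orthogonal matrix, and Σ is a q×q diagonal matrix with nonnegative diagonal entries. Then X* = V_L V_Rᵀ belongs to St(m,q) and maximizes Tr(YᵀX) over St(m,q): for every X ∈ St(m,q), Tr(YᵀX) ≤ Tr(YᵀX*) = Tr(Σ). -/
open Matrix

lemma diag_le_one' {m q : ℕ} (A B : Matrix (Fin m) (Fin q) ℝ)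
    (hA : Aᵀ * A = 1) (hB : Bᵀ * B = 1) (i : Fin q) :
    (Aᵀ * B) i i ≤ 1 := by
  have hA' : ∑ k, A k i ^ 2 = 1 := by
    have := congrFun (congrFun hA i) i
    simpa [Matrix.mul_apply, Matrix.one_apply, sq] using this
  have hB' : ∑ k, B k i ^ 2 = 1 := by
    have := congrFun (congrFun hB i) i
    simpa [Matrix.mul_apply, Matrix.one_apply, sq] using this
  have h2 : (∑ k, A k i * B k i) ^ 2 ≤ (∑ k, A k i ^ 2) * (∑ k, B k i ^ 2) :=
    Finset.sum_mul_sq_le_sq_mul_sq Finset.univ _ _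
  have h3 : (∑ k, A k i * B k i) ^ 2 ≤ 1 := by rw [hA', hB'] at h2; linarith
  have : (Aᵀ * B) i i = ∑ k, A k i * B k i := by
    simp [Matrix.mul_apply, Matrix.transpose_apply]
  rw [this]
  nlinarith [h3]

theorem stmt2 (m q : ℕ) (hq : 1 ≤ q) (hqm : q ≤ m)
    (Y VL : Matrix (Fin m) (Fin q) ℝ) (VR : Matrix (Fin q) (Fin q) ℝ)
    (σ : Fin q → ℝ) (hσ : ∀ i, 0 ≤ σ i)
    (hVL : VLᵀ * VL = 1) (hVR : VRᵀ * VR = 1)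
    (hY : Y = VL * Matrix.diagonal σ * VRᵀ) :
    (VL * VRᵀ)ᵀ * (VL * VRᵀ) = 1 ∧
    Matrix.trace (Yᵀ * (VL * VRᵀ)) = Matrix.trace (Matrix.diagonal σ) ∧
    ∀ X : Matrix (Fin m) (Fin q) ℝ, Xᵀ * X = 1 →
      Matrix.trace (Yᵀ * X) ≤ Matrix.trace (Yᵀ * (VL * VRᵀ)) := by
  have hVR' : VR * VRᵀ = 1 := mul_eq_one_comm.mp hVR
  have hst : (VL * VRᵀ)ᵀ * (VL * VRᵀ) = 1 := by
    calc (VL * VRᵀ)ᵀ * (VL * VRᵀ) = VR * (VLᵀ * VL) * VRᵀ := by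
          rw [Matrix.transpose_mul, Matrix.transpose_transpose]
          rw [Matrix.mul_assoc, Matrix.mul_assoc, Matrix.mul_assoc]
      _ = 1 := by rw [hVL, Matrix.mul_one, hVR']
  have hYt : Yᵀ = VR * Matrix.diagonal σ * VLᵀ := by
    rw [hY]
    simp [Matrix.transpose_mul, Matrix.diagonal_transpose, Matrix.mul_assoc]
  have htr : Matrix.trace (Yᵀ * (VL * VRᵀ)) = Matrix.trace (Matrix.diagonal σ) := by
    rw [hYt]
    calc Matrix.trace (VR * Matrix.diagonal σ * VLᵀ * (VL * VRᵀ))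
        = Matrix.trace (VR * Matrix.diagonal σ * (VLᵀ * VL) * VRᵀ) := by
          simp only [Matrix.mul_assoc]
      _ = Matrix.trace (VR * Matrix.diagonal σ * VRᵀ) := by rw [hVL, Matrix.mul_one]
      _ = Matrix.trace (Matrix.diagonal σ) := by
          rw [Matrix.trace_mul_cycle, hVR, Matrix.one_mul]
  refine ⟨hst, htr, fun X hX => ?_⟩
  rw [htr]
  -- trace (Yᵀ X) = ∑ i, σ i * (VLᵀ * (X * VR)) i i
  have hXVR : (X * VR)ᵀ * (X * VR) = 1 := by
    rw [Matrix.transpose_mul, Matrix.mul_assoc, ← Matrix.mul_assoc Xᵀ, hX,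
      Matrix.one_mul, hVR]
  have key : Matrix.trace (Yᵀ * X) = ∑ i, σ i * (VLᵀ * (X * VR)) i i := by
    rw [hYt]
    have : VR * Matrix.diagonal σ * VLᵀ * X = VR * (Matrix.diagonal σ * (VLᵀ * X)) := by
      rw [Matrix.mul_assoc, Matrix.mul_assoc]
    rw [this, Matrix.trace_mul_comm]
    have : Matrix.diagonal σ * (VLᵀ * X) * VR = Matrix.diagonal σ * (VLᵀ * (X * VR)) := by
      rw [Matrix.mul_assoc, Matrix.mul_assoc]
    rw [this, Matrix.trace]
    simp [Matrix.diag, Matrix.diagonal_mul]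
  rw [key, Matrix.trace_diagonal]
  apply Finset.sum_le_sum
  intro i _
  have := diag_le_one' VL (X * VR) hVL hXVR i
  nlinarith [hσ i]
end

section
/- Let z ∈ ℝ^m have all entries positive, let 1 ≤ q ≤ m, and let λ* be a minimizer of F_z over Λ_{q,m}. Then for every index k with 1 ≤ k < q, if z_k < z_{k+1} then λ*_k = λ*_{k+1}; that is, any adjacent ordering violation among the first q weights forces equality of the corresponding optimal eigenvalues. -/
/-- The objective `F_z(λ) = Σ_{i=1}^m (−log λ_i + z_i λ_i)` (indices 1,…,m). -/
noncomputable def Fobj (m : ℕ) (z lam : ℕ → ℝ) : ℝ :=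
  ∑ i ∈ Finset.Icc 1 m, (-(Real.log (lam i)) + z i * lam i)

/-- The feasible set `Λ_{q,m}`: positive entries, `λ_i ≤ λ_{i+1}` for `i = 1,…,q−1`,
and `λ_q ≤ λ_j` for `j = q+1,…,m`. -/
def Feas (q m : ℕ) (lam : ℕ → ℝ) : Prop :=
  (∀ i ∈ Finset.Icc 1 m, 0 < lam i) ∧
  (∀ i, 1 ≤ i → i + 1 ≤ q → lam i ≤ lam (i + 1)) ∧
  (∀ j, q < j → j ≤ m → lam q ≤ lam j)

lemma Fobj_update (m : ℕ) (z lam : ℕ → ℝ) (j : ℕ) (hj : j ∈ Finset.Icc 1 m) (c : ℝ) :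
    Fobj m z (Function.update lam j c)
      = Fobj m z lam
        + ((-(Real.log c) + z j * c) - (-(Real.log (lam j)) + z j * (lam j))) := by
  unfold Fobj
  rw [← Finset.add_sum_erase _ _ hj,
      ← Finset.add_sum_erase _ (fun i => -(Real.log (lam i)) + z i * lam i) hj]
  have h1 : ∀ i ∈ (Finset.Icc 1 m).erase j,
      (-(Real.log (Function.update lam j c i)) + z i * Function.update lam j c i)
        = -(Real.log (lam i)) + z i * lam i := by
    intro i hi
    rw [Function.update_of_ne (Finset.ne_of_mem_erase hi)]
  rw [Finset.sum_congr rfl h1, Function.update_self]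
  ring

theorem stmt10 (m q : ℕ) (hq : 1 ≤ q) (hqm : q ≤ m) (z : ℕ → ℝ)
    (hz : ∀ i ∈ Finset.Icc 1 m, 0 < z i)
    (lam : ℕ → ℝ) (hfeas : Feas q m lam)
    (hmin : ∀ mu : ℕ → ℝ, Feas q m mu → Fobj m z lam ≤ Fobj m z mu) :
    ∀ k, 1 ≤ k → k + 1 ≤ q → z k < z (k + 1) → lam k = lam (k + 1) := by
  intro k hk hk1 hzk
  obtain ⟨hpos, hmono, htail⟩ := hfeas
  have hkm : k ∈ Finset.Icc 1 m := by simp only [Finset.mem_Icc]; omega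
  have hk1m : k + 1 ∈ Finset.Icc 1 m := by simp only [Finset.mem_Icc]; omega
  have hab : lam k ≤ lam (k + 1) := hmono k hk hk1
  -- mu1 : set entry k+1 to lam k
  have hfeas1 : Feas q m (Function.update lam (k + 1) (lam k)) := by
    refine ⟨?_, ?_, ?_⟩
    · intro i hi
      rcases eq_or_ne i (k + 1) with h | h
      · rw [h, Function.update_self]; exact hpos k hkm
      · rw [Function.update_of_ne h]; exact hpos i hi
    · intro i hi hiq
      rcases eq_or_ne (i + 1) (k + 1) with h | h
      · have hik : i = k := by omega
        rw [hik, Function.update_self, Function.update_of_ne (show k ≠ k + 1 by omega)]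
      · rw [Function.update_of_ne h]
        rcases eq_or_ne i (k + 1) with h' | h'
        · subst h'
          rw [Function.update_self]
          exact le_trans hab (hmono (k + 1) (by omega) hiq)
        · rw [Function.update_of_ne h']
          exact hmono i hi hiq
    · intro j hj hjm
      have hjne : j ≠ k + 1 := by omega
      rw [Function.update_of_ne hjne]
      rcases eq_or_ne q (k + 1) with h | h
      · rw [h, Function.update_self]
        exact le_trans hab (h ▸ htail j hj hjm)
      · rw [Function.update_of_ne h]
        exact htail j hj hjm
  -- mu2 : set entry k to lam (k+1)
  have hfeas2 : Feas q m (Function.update lam k (lam (k + 1))) := by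
    refine ⟨?_, ?_, ?_⟩
    · intro i hi
      rcases eq_or_ne i k with h | h
      · rw [h, Function.update_self]; exact hpos (k + 1) hk1m
      · rw [Function.update_of_ne h]; exact hpos i hi
    · intro i hi hiq
      rcases eq_or_ne i k with h | h
      · rw [h, Function.update_self, Function.update_of_ne (show k + 1 ≠ k by omega)]
      · rw [Function.update_of_ne h]
        rcases eq_or_ne (i + 1) k with h' | h'
        · rw [h', Function.update_self]
          exact le_trans (h' ▸ hmono i hi hiq) hab
        · rw [Function.update_of_ne h']
          exact hmono i hi hiq
    · intro j hj hjm
      have hjne : j ≠ k := by omega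
      have hqne : q ≠ k := by omega
      rw [Function.update_of_ne hjne, Function.update_of_ne hqne]
      exact htail j hj hjm
  have h1 := hmin _ hfeas1
  have h2 := hmin _ hfeas2
  rw [Fobj_update m z lam (k + 1) hk1m (lam k)] at h1
  rw [Fobj_update m z lam k hkm (lam (k + 1))] at h2
  -- extract the two scalar inequalities and combine
  have e1 : -(Real.log (lam (k + 1))) + z (k + 1) * lam (k + 1)
      ≤ -(Real.log (lam k)) + z (k + 1) * lam k := by linarith
  have e2 : -(Real.log (lam k)) + z k * lam k
      ≤ -(Real.log (lam (k + 1))) + z k * lam (k + 1) := by linarith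
  have hba : lam (k + 1) ≤ lam k := by nlinarith
  linarith
end

section
/- Let z ∈ ℝ^m have all entries positive, let 1 ≤ q ≤ m, and let j, r with 1 ≤ j and j + r ≤ q be such that: z_{j−1} > z_j if j > 1; z_i ≤ z_{i+1} for i = j,…,j+r−1 with at least one of these inequalities strict; and either z_{j+r} > z_{j+r+1} (if j+r < q) or z_q > z_j' for all j' = q+1,…,m (if j+r = q). Define z̄ ∈ ℝ^m by z̄_i = (1/(r+1)) Σ_{s=0}^{r} z_{j+s} for i = j,…,j+r and z̄_i = z_i otherwise. Then the unique minimizer of F_z over Λ_{q,m} coincides with the unique minimizer of F_{z̄} over Λ_{q,m}, and at this common minimizer λ* one has λ*_j = λ*_{j+1} = … = λ*_{j+r}. -/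
lemma g_lt_dec {c a b : ℝ} (ha : 0 < a) (hab : a < b) (hb : b * c ≤ 1) :
    -Real.log b + c * b < -Real.log a + c * a := by
  have hb0 : 0 < b := ha.trans hab
  have h1 : Real.log (a / b) < a / b - 1 :=
    Real.log_lt_sub_one_of_pos (by positivity) (by
      intro h
      rw [div_eq_one_iff_eq hb0.ne'] at h
      exact hab.ne h)
  rw [Real.log_div ha.ne' hb0.ne'] at h1
  have h1' : (Real.log a - Real.log b) * b < a - b := by
    have := mul_lt_mul_of_pos_right h1 hb0
    have hx : (a / b - 1) * b = a - b := by field_simp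
    linarith [hx ▸ this]
  have h3 : (b - a) * (b * c) ≤ (b - a) * 1 := by
    apply mul_le_mul_of_nonneg_left hb (by linarith)
  nlinarith [hb0]

lemma g_lt_inc {c a b : ℝ} (ha : 0 < a) (hab : a < b) (hac : 1 ≤ a * c) :
    -Real.log a + c * a < -Real.log b + c * b := by
  have hb0 : 0 < b := ha.trans hab
  have h1 : Real.log (b / a) < b / a - 1 :=
    Real.log_lt_sub_one_of_pos (by positivity) (by
      intro h
      rw [div_eq_one_iff_eq ha.ne'] at h
      exact hab.ne' h)
  rw [Real.log_div hb0.ne' ha.ne'] at h1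
  have h1' : (Real.log b - Real.log a) * a < b - a := by
    have := mul_lt_mul_of_pos_right h1 ha
    have hx : (b / a - 1) * a = b - a := by field_simp
    linarith [hx ▸ this]
  have h3 : (b - a) * 1 ≤ (b - a) * (a * c) := by
    apply mul_le_mul_of_nonneg_left hac (by linarith)
  nlinarith [ha]

lemma g_min {c lo hi x : ℝ} (hc : 0 < c) (hlo : 0 < lo) (hlh : lo ≤ hi)
    (hx1 : lo ≤ x) (hx2 : x ≤ hi) (hne : x ≠ max lo (min (1/c) hi)) :
    -Real.log (max lo (min (1/c) hi)) + c * (max lo (min (1/c) hi)) < -Real.log x + c * x := by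
  set t := max lo (min (1/c) hi) with hts
  have hu0 : 0 < 1/c := by positivity
  have ht1 : lo ≤ t := le_max_left _ _
  have ht2 : t ≤ hi := max_le hlh (min_le_right _ _)
  have ht0 : 0 < t := lt_of_lt_of_le hlo ht1
  have hx0 : 0 < x := lt_of_lt_of_le hlo hx1
  rcases le_or_gt (1/c) lo with hul | hul
  · have htlo : t = lo := by
      rw [hts, max_eq_left ((min_le_left _ _).trans hul)]
    have htx : t < x := lt_of_le_of_ne (htlo ▸ hx1) (Ne.symm hne)
    have htc : 1 ≤ t * c := by
      have : 1/c ≤ t := htlo ▸ hul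
      rw [div_le_iff₀ hc] at this
      linarith
    exact g_lt_inc ht0 htx htc
  · rcases le_or_gt hi (1/c) with hhu | hhu
    · have hthi : t = hi := by
        rw [hts, min_eq_right hhu, max_eq_right hlh]
      have hxt : x < t := lt_of_le_of_ne (hthi ▸ hx2) hne
      have htc : t * c ≤ 1 := by
        have : t ≤ 1/c := hthi ▸ hhu
        rw [le_div_iff₀ hc] at this
        linarith
      exact g_lt_dec hx0 hxt htc
    · have htu : t = 1/c := by
        rw [hts, min_eq_left hhu.le, max_eq_right hul.le]
      have huc : (1/c) * c = 1 := by field_simp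
      rcases lt_or_gt_of_ne hne with hxx | hxx
      · exact g_lt_dec hx0 (htu ▸ hxx) (by rw [htu, huc])
      · exact g_lt_inc ht0 (htu ▸ hxx) (by rw [htu, huc])

lemma g_min_le {c lo hi x : ℝ} (hc : 0 < c) (hlo : 0 < lo) (hlh : lo ≤ hi)
    (hx1 : lo ≤ x) (hx2 : x ≤ hi) :
    -Real.log (max lo (min (1/c) hi)) + c * (max lo (min (1/c) hi)) ≤ -Real.log x + c * x := by
  by_cases h : x = max lo (min (1/c) hi)
  · rw [h]
  · exact (g_min hc hlo hlh hx1 hx2 h).le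

lemma chain_mono {f : ℕ → ℝ} {A B : ℕ} (h : ∀ i, A ≤ i → i + 1 ≤ B → f i ≤ f (i + 1)) :
    ∀ a b, A ≤ a → a ≤ b → b ≤ B → f a ≤ f b := by
  intro a b hA hab
  induction b, hab using Nat.le_induction with
  | base => intro _; exact le_rfl
  | succ n hn ih =>
    intro hB
    exact (ih (Nat.le_of_succ_le hB)).trans (h n (hA.trans hn) hB)

lemma log_avg {a b : ℝ} (ha : 0 < a) (hb : 0 < b) (hne : a ≠ b) :
    Real.log a / 2 + Real.log b / 2 < Real.log ((a + b) / 2) := by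
  have := strictConcaveOn_log_Ioi.2 (Set.mem_Ioi.2 ha) (Set.mem_Ioi.2 hb) hne
    (by norm_num : (0:ℝ) < 1/2) (by norm_num : (0:ℝ) < 1/2) (by norm_num)
  simp only [smul_eq_mul] at this
  calc Real.log a / 2 + Real.log b / 2 = 1/2 * Real.log a + 1/2 * Real.log b := by ring
    _ < Real.log (1/2 * a + 1/2 * b) := this
    _ = Real.log ((a + b) / 2) := by ring_nf

theorem stmt11 (m q : ℕ) (hq : 1 ≤ q) (hqm : q ≤ m) (z : ℕ → ℝ)
    (hz : ∀ i ∈ Finset.Icc 1 m, 0 < z i)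
    (j r : ℕ) (hj : 1 ≤ j) (hjr : j + r ≤ q)
    (hleft : 1 < j → z j < z (j - 1))
    (hviol : ∀ i, j ≤ i → i < j + r → z i ≤ z (i + 1))
    (hstrict : ∃ i, j ≤ i ∧ i < j + r ∧ z i < z (i + 1))
    (hright1 : j + r < q → z (j + r + 1) < z (j + r))
    (hright2 : j + r = q → ∀ j', q < j' → j' ≤ m → z j' < z q)
    (zbar : ℕ → ℝ)
    (hzbar : zbar = fun i =>
      if j ≤ i ∧ i ≤ j + r then (∑ s ∈ Finset.range (r + 1), z (j + s)) / (r + 1) else z i)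
    (lam mu : ℕ → ℝ)
    (hlam : Feas q m lam ∧ ∀ nu : ℕ → ℝ, Feas q m nu → Fobj m z lam ≤ Fobj m z nu)
    (hmu : Feas q m mu ∧ ∀ nu : ℕ → ℝ, Feas q m nu → Fobj m zbar mu ≤ Fobj m zbar nu) :
    (∀ i ∈ Finset.Icc 1 m, lam i = mu i) ∧
    (∀ i, j ≤ i → i ≤ j + r → lam i = lam j) := by
  clear hleft hstrict hright1 hright2
  obtain ⟨hlamF, hlamM⟩ := hlam
  obtain ⟨hmuF, hmuM⟩ := hmu
  obtain ⟨hmuP, hmuMono, hmuTail⟩ := hmuF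
  obtain ⟨hlamP, hlamMono, hlamTail⟩ := hlamF
  set S : ℝ := ∑ s ∈ Finset.range (r + 1), z (j + s) with hS
  set c : ℝ := S / (r + 1) with hcdef
  set B : Finset ℕ := Finset.Icc j (j + r) with hB
  have hsub : B ⊆ Finset.Icc 1 m := by
    intro i hi
    simp only [hB, Finset.mem_Icc] at hi ⊢
    omega
  have hmemB : ∀ i, j ≤ i → i ≤ j + r → i ∈ B := by
    intro i h1 h2
    rw [hB]
    exact Finset.mem_Icc.2 ⟨h1, h2⟩
  have hmem : ∀ i, j ≤ i → i ≤ j + r → i ∈ Finset.Icc 1 m := fun i h1 h2 =>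
    hsub (hmemB i h1 h2)
  have hr1 : (0:ℝ) < (r:ℝ) + 1 := by positivity
  have hc0 : 0 < c := by
    rw [hcdef]
    apply div_pos _ hr1
    apply Finset.sum_pos
    · intro s hs
      apply hz
      exact hmem _ (Nat.le_add_right _ _) (by simp only [Finset.mem_range] at hs; omega)
    · exact Finset.nonempty_range_add_one
  have hsum_block : ∀ f : ℕ → ℝ, ∑ i ∈ B, f i = ∑ s ∈ Finset.range (r + 1), f (j + s) := by
    intro f
    rw [hB, ← Finset.Ico_add_one_right_eq_Icc, Finset.sum_Ico_eq_sum_range,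
      show j + r + 1 - j = r + 1 from by omega]
  have hzS : ∑ i ∈ B, z i = S := hsum_block z
  have hcardN : B.card = r + 1 := by
    rw [hB, Nat.card_Icc]
    omega
  have hcard : (B.card : ℝ) = (r:ℝ) + 1 := by
    rw [hcardN]
    push_cast
    ring
  have hzbar_in : ∀ i ∈ B, zbar i = c := by
    intro i hi
    rw [hB, Finset.mem_Icc] at hi
    simp only [hzbar]
    rw [if_pos hi]
  have hzbar_out : ∀ i, i ∉ B → zbar i = z i := by
    intro i hi
    rw [hB, Finset.mem_Icc] at hi
    simp only [hzbar]
    rw [if_neg hi]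
  -- difference of objectives
  have hdiff : ∀ f : ℕ → ℝ, Fobj m z f - Fobj m zbar f = ∑ i ∈ B, (z i - c) * f i := by
    intro f
    have e1 : ∑ i ∈ Finset.Icc 1 m,
        ((-(Real.log (f i)) + z i * f i) - (-(Real.log (f i)) + zbar i * f i))
        = ∑ i ∈ Finset.Icc 1 m, (z i - zbar i) * f i :=
      Finset.sum_congr rfl (fun i _ => by ring)
    have e2 : ∑ i ∈ Finset.Icc 1 m, (z i - zbar i) * f i = ∑ i ∈ B, (z i - zbar i) * f i := by
      refine (Finset.sum_subset hsub ?_).symm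
      intro i _ hni
      rw [hzbar_out i hni]
      ring
    have e3 : ∑ i ∈ B, (z i - zbar i) * f i = ∑ i ∈ B, (z i - c) * f i :=
      Finset.sum_congr rfl (fun i hi => by rw [hzbar_in i hi])
    rw [Fobj, Fobj, ← Finset.sum_sub_distrib, e1, e2, e3]
  -- Step B: Chebyshev inequality
  have hstepB : ∀ nu : ℕ → ℝ, Feas q m nu → 0 ≤ ∑ i ∈ B, (z i - c) * nu i := by
    intro nu hnu
    obtain ⟨hnuP, hnuMono, hnuTail⟩ := hnu
    have hnuchain : ∀ a b : ℕ, 1 ≤ a → a ≤ b → b ≤ q → nu a ≤ nu b := chain_mono hnuMono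
    have hzchain : ∀ a b : ℕ, j ≤ a → a ≤ b → b ≤ j + r → z a ≤ z b :=
      chain_mono (fun i h1 h2 => hviol i h1 (by omega))
    have hmono : MonovaryOn z nu (B : Set ℕ) := by
      intro a ha b hb hab
      rw [hB] at ha hb
      simp only [Finset.coe_Icc, Set.mem_Icc] at ha hb
      rcases le_or_gt a b with h | h
      · exact hzchain a b ha.1 h hb.2
      · exfalso
        have := hnuchain b a (by omega) h.le (by omega)
        linarith
    have hcheb := hmono.sum_mul_sum_le_card_mul_sum
    rw [hzS, hcard] at hcheb
    have expand : ∑ i ∈ B, (z i - c) * nu i = ∑ i ∈ B, z i * nu i - c * ∑ i ∈ B, nu i := by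
      rw [Finset.mul_sum, ← Finset.sum_sub_distrib]
      exact Finset.sum_congr rfl (fun i _ => by ring)
    rw [expand]
    have : c * ∑ i ∈ B, nu i ≤ ∑ i ∈ B, z i * nu i := by
      rw [hcdef, div_mul_eq_mul_div, div_le_iff₀ hr1]
      linarith
    linarith
  -- Step A: mu is constant on the block
  have hmuchain : ∀ a b : ℕ, 1 ≤ a → a ≤ b → b ≤ q → mu a ≤ mu b := chain_mono hmuMono
  have hmuj0 : 0 < mu j := hmuP _ (hmem j le_rfl (Nat.le_add_right _ _))
  have hjjr : mu j ≤ mu (j + r) := hmuchain j (j + r) hj (Nat.le_add_right _ _) hjr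
  set t : ℝ := max (mu j) (min (1 / c) (mu (j + r))) with htdef
  have ht1 : mu j ≤ t := le_max_left _ _
  have ht2 : t ≤ mu (j + r) := max_le hjjr (min_le_right _ _)
  have ht0 : 0 < t := lt_of_lt_of_le hmuj0 ht1
  set nu1 : ℕ → ℝ := fun i => if j ≤ i ∧ i ≤ j + r then t else mu i with hnu1
  have hnu1_in : ∀ i, j ≤ i → i ≤ j + r → nu1 i = t := by
    intro i h1 h2
    simp only [hnu1]
    rw [if_pos ⟨h1, h2⟩]
  have hnu1_out : ∀ i, ¬(j ≤ i ∧ i ≤ j + r) → nu1 i = mu i := by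
    intro i h
    simp only [hnu1]
    rw [if_neg h]
  have hfeas1 : Feas q m nu1 := by
    refine ⟨?_, ?_, ?_⟩
    · intro i hi
      by_cases h : j ≤ i ∧ i ≤ j + r
      · rw [hnu1_in i h.1 h.2]; exact ht0
      · rw [hnu1_out i h]; exact hmuP i hi
    · intro i h1 h2
      by_cases hA : j ≤ i ∧ i ≤ j + r <;> by_cases hB2 : j ≤ i + 1 ∧ i + 1 ≤ j + r
      · rw [hnu1_in i hA.1 hA.2, hnu1_in (i+1) hB2.1 hB2.2]
      · have hieq : i = j + r := by omega
        rw [hnu1_in i hA.1 hA.2, hnu1_out (i+1) hB2]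
        refine ht2.trans ?_
        rw [hieq] at h2 ⊢
        exact hmuMono (j + r) (by omega) h2
      · have hieq : i + 1 = j := by omega
        rw [hnu1_out i hA, hnu1_in (i+1) hB2.1 hB2.2]
        refine le_trans ?_ ht1
        rw [← hieq]
        exact hmuMono i h1 h2
      · rw [hnu1_out i hA, hnu1_out (i+1) hB2]
        exact hmuMono i h1 h2
    · intro j' hj1 hj2
      rw [hnu1_out j' (by omega)]
      by_cases hqb : j ≤ q ∧ q ≤ j + r
      · rw [hnu1_in q hqb.1 hqb.2]
        have hqq : q = j + r := by omega
        refine le_trans ?_ (hmuTail j' hj1 hj2)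
        rw [hqq]
        exact ht2
      · rw [hnu1_out q hqb]
        exact hmuTail j' hj1 hj2
  have hsplitA : Fobj m zbar mu - Fobj m zbar nu1
      = ∑ i ∈ B, ((-(Real.log (mu i)) + c * mu i) - (-(Real.log t) + c * t)) := by
    have e2 : ∑ i ∈ Finset.Icc 1 m,
        ((-(Real.log (mu i)) + zbar i * mu i) - (-(Real.log (nu1 i)) + zbar i * nu1 i))
        = ∑ i ∈ B, ((-(Real.log (mu i)) + zbar i * mu i) - (-(Real.log (nu1 i)) + zbar i * nu1 i)) := by
      refine (Finset.sum_subset hsub ?_).symm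
      intro i _ hni
      rw [hB, Finset.mem_Icc] at hni
      rw [hnu1_out i hni]
      ring
    rw [Fobj, Fobj, ← Finset.sum_sub_distrib, e2]
    refine Finset.sum_congr rfl ?_
    intro i hi
    have hiB := hi
    rw [hB, Finset.mem_Icc] at hiB
    rw [hzbar_in i hi, hnu1_in i hiB.1 hiB.2]
  have htermA : ∀ i ∈ B, 0 ≤ (-(Real.log (mu i)) + c * mu i) - (-(Real.log t) + c * t) := by
    intro i hi
    rw [hB, Finset.mem_Icc] at hi
    have h1 : mu j ≤ mu i := hmuchain j i hj hi.1 (by omega)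
    have h2 : mu i ≤ mu (j + r) := hmuchain i (j + r) (by omega) hi.2 hjr
    have := g_min_le hc0 hmuj0 hjjr h1 h2
    rw [← htdef] at this
    linarith
  have hconst : ∀ i, j ≤ i → i ≤ j + r → mu i = t := by
    intro i hi1 hi2
    by_contra hne
    have hstrictA : 0 < Fobj m zbar mu - Fobj m zbar nu1 := by
      rw [hsplitA]
      refine Finset.sum_pos' htermA ⟨i, hmemB i hi1 hi2, ?_⟩
      have h1 : mu j ≤ mu i := hmuchain j i hj hi1 (by omega)
      have h2 : mu i ≤ mu (j + r) := hmuchain i (j + r) (by omega) hi2 hjr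
      rw [htdef] at hne
      have := g_min hc0 hmuj0 hjjr h1 h2 hne
      rw [← htdef] at this
      linarith
    have := hmuM nu1 hfeas1
    linarith
  -- Step C: mu also minimizes F_z
  have hsumz0 : ∑ i ∈ B, (z i - c) = 0 := by
    rw [Finset.sum_sub_distrib, hzS, Finset.sum_const, hcardN, nsmul_eq_mul]
    push_cast
    rw [hcdef]
    field_simp
    ring
  have hBmu0 : ∑ i ∈ B, (z i - c) * mu i = 0 := by
    have e : ∀ i ∈ B, (z i - c) * mu i = (z i - c) * t := by
      intro i hi
      rw [hB, Finset.mem_Icc] at hi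
      rw [hconst i hi.1 hi.2]
    rw [Finset.sum_congr rfl e, ← Finset.sum_mul, hsumz0, zero_mul]
  have hmuZ : Fobj m z mu = Fobj m zbar mu := by
    have := hdiff mu
    rw [hBmu0] at this
    linarith
  have hminZ : ∀ nu : ℕ → ℝ, Feas q m nu → Fobj m z mu ≤ Fobj m z nu := by
    intro nu hnu
    have h1 := hmuM nu hnu
    have h2 := hdiff nu
    have h3 := hstepB nu hnu
    linarith
  -- Step D: uniqueness via midpoint
  have hlamZ : Fobj m z lam = Fobj m z mu :=
    le_antisymm (hlamM mu ⟨hmuP, hmuMono, hmuTail⟩) (hminZ lam ⟨hlamP, hlamMono, hlamTail⟩)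
  set w : ℕ → ℝ := fun i => (lam i + mu i) / 2 with hw
  have hwF : Feas q m w := by
    refine ⟨?_, ?_, ?_⟩
    · intro i hi
      have h1 := hlamP i hi
      have h2 := hmuP i hi
      simp only [hw]
      positivity
    · intro i h1 h2
      have h3 := hlamMono i h1 h2
      have h4 := hmuMono i h1 h2
      simp only [hw]
      linarith
    · intro j' h1 h2
      have h3 := hlamTail j' h1 h2
      have h4 := hmuTail j' h1 h2
      simp only [hw]
      linarith
  have hall : ∀ i ∈ Finset.Icc 1 m, lam i = mu i := by
    by_contra hc'
    push_neg at hc'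
    obtain ⟨i0, hi0, hi0ne⟩ := hc'
    have htermle : ∀ i ∈ Finset.Icc 1 m,
        (-(Real.log (w i)) + z i * w i)
          ≤ ((-(Real.log (lam i)) + z i * lam i) + (-(Real.log (mu i)) + z i * mu i)) / 2 := by
      intro i hi
      by_cases hne : lam i = mu i
      · simp only [hw, hne]
        apply le_of_eq
        have e : (mu i + mu i) / 2 = mu i := by ring
        rw [e]
        ring
      · have hlog := log_avg (hlamP i hi) (hmuP i hi) hne
        simp only [hw]
        have e : z i * ((lam i + mu i) / 2) = (z i * lam i + z i * mu i) / 2 := by ring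
        linarith
    have htermlt : (-(Real.log (w i0)) + z i0 * w i0)
          < ((-(Real.log (lam i0)) + z i0 * lam i0) + (-(Real.log (mu i0)) + z i0 * mu i0)) / 2 := by
      have hlog := log_avg (hlamP i0 hi0) (hmuP i0 hi0) hi0ne
      simp only [hw]
      have e : z i0 * ((lam i0 + mu i0) / 2) = (z i0 * lam i0 + z i0 * mu i0) / 2 := by ring
      linarith
    have hlt : Fobj m z w < Fobj m z lam := by
      calc Fobj m z w
          < ∑ i ∈ Finset.Icc 1 m,
              (((-(Real.log (lam i)) + z i * lam i) + (-(Real.log (mu i)) + z i * mu i)) / 2) := by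
            rw [Fobj]
            exact Finset.sum_lt_sum htermle ⟨i0, hi0, htermlt⟩
        _ = (Fobj m z lam + Fobj m z mu) / 2 := by
            rw [Fobj, Fobj, ← Finset.sum_div, ← Finset.sum_add_distrib]
        _ = Fobj m z lam := by
            rw [hlamZ]
            ring
    exact absurd (hlamM w hwF) (by linarith)
  refine ⟨hall, ?_⟩
  intro i hi1 hi2
  have h1 : lam i = mu i := hall i (hmem i hi1 hi2)
  have h2 : lam j = mu j := hall j (hmem j le_rfl (Nat.le_add_right _ _))
  rw [h1, h2, hconst i hi1 hi2, hconst j le_rfl (Nat.le_add_right _ _)]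
end

section
/- Let z ∈ ℝ^m have all entries positive, let 1 ≤ q ≤ m, and let λ* be a minimizer of F_z over Λ_{q,m}. Then for every j with q < j ≤ m, if λ*_q < λ*_j (the constraint λ_q ≤ λ_j is inactive at the optimum) then λ*_j = 1/z_j. -/
theorem stmt13 (m q : ℕ) (hq : 1 ≤ q) (hqm : q ≤ m) (z : ℕ → ℝ)
    (hz : ∀ i ∈ Finset.Icc 1 m, 0 < z i)
    (lam : ℕ → ℝ) (hfeas : Feas q m lam)
    (hmin : ∀ mu : ℕ → ℝ, Feas q m mu → Fobj m z lam ≤ Fobj m z mu) :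
    ∀ j, q < j → j ≤ m → lam q < lam j → lam j = 1 / z j := by
  rintro j hqj hjm hlt
  have hj1 : 1 ≤ j := le_trans hq hqj.le
  have hjmem : j ∈ Finset.Icc 1 m := Finset.mem_Icc.mpr ⟨hj1, hjm⟩
  obtain ⟨hpos, hmono, hq_le⟩ := hfeas
  have hqmem : q ∈ Finset.Icc 1 m := Finset.mem_Icc.mpr ⟨hq, hqm⟩
  have hlamq : 0 < lam q := hpos q hqmem
  have hlamj : 0 < lam j := hpos j hjmem
  set g : ℝ → ℝ := fun t => -(Real.log t) + z j * t with hg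
  have hfeas' : ∀ t : ℝ, lam q ≤ t → Feas q m (Function.update lam j t) := by
    intro t ht
    refine ⟨?_, ?_, ?_⟩
    · intro i hi
      by_cases h : i = j
      · subst h; simpa using lt_of_lt_of_le hlamq ht
      · simpa [Function.update_of_ne h] using hpos i hi
    · intro i hi1 hi2
      have h1 : i ≠ j := by omega
      have h2 : i + 1 ≠ j := by omega
      simpa [Function.update_of_ne h1, Function.update_of_ne h2] using hmono i hi1 hi2
    · intro j' hj'1 hj'2
      have hqj' : q ≠ j := by omega
      rw [Function.update_of_ne hqj']
      by_cases h : j' = j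
      · subst h; simpa using ht
      · simpa [Function.update_of_ne h] using hq_le j' hj'1 hj'2
  have hsum : ∀ t : ℝ, Fobj m z (Function.update lam j t)
      = (∑ i ∈ (Finset.Icc 1 m).erase j, (-(Real.log (lam i)) + z i * lam i)) + g t := by
    intro t
    rw [Fobj, ← Finset.add_sum_erase _ _ hjmem, add_comm]
    congr 1
    · apply Finset.sum_congr rfl
      intro i hi
      rw [Function.update_of_ne (Finset.ne_of_mem_erase hi)]
    · simp [hg]
  have hloc : IsLocalMin g (lam j) := by
    have hmem : Set.Ioi (lam q) ∈ nhds (lam j) := Ioi_mem_nhds hlt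
    filter_upwards [hmem] with t ht
    have hle := hmin _ (hfeas' t (le_of_lt ht))
    have h1 := hsum t
    have h2 := hsum (lam j)
    rw [Function.update_eq_self] at h2
    linarith
  have hderiv : HasDerivAt g (-(lam j)⁻¹ + z j) (lam j) := by
    have h1 := (Real.hasDerivAt_log hlamj.ne').neg
    have h2 := (hasDerivAt_id (lam j)).const_mul (z j)
    exact (h1.add h2).congr_deriv (by simp)
  have h0 : -(lam j)⁻¹ + z j = 0 := by
    have := hloc.deriv_eq_zero
    rwa [hderiv.deriv] at this
  have hzj : 0 < z j := hz j hjmem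
  field_simp
  nlinarith [mul_inv_cancel₀ hlamj.ne', h0]
end

section
/- Let S be a real symmetric m×m matrix, let λ ∈ ℝ be such that λI_m − S is positive semidefinite (e.g., λ is the largest eigenvalue of S), and let Λ be an m×m diagonal matrix with nonnegative diagonal entries. Then for all real m×m matrices U and U₀ with UᵀU = I_m and U₀ᵀU₀ = I_m, Tr(SUΛUᵀ) − 2·Tr(Λ U₀ᵀ(S − λI_m)U) ≤ Tr(SU₀ΛU₀ᵀ) − 2·Tr(Λ U₀ᵀ(S − λI_m)U₀); that is, up to an additive constant, the linear function U ↦ 2·Tr(Λ U₀ᵀ(S − λI_m)U) majorizes U ↦ Tr(SUΛUᵀ) on the set of orthogonal matrices, with equality at U = U₀. -/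
open Matrix

theorem stmt16 (m : ℕ) (S : Matrix (Fin m) (Fin m) ℝ) (hS : S.IsSymm)
    (l : ℝ) (hl : (l • (1 : Matrix (Fin m) (Fin m) ℝ) - S).PosSemidef)
    (d : Fin m → ℝ) (hd : ∀ i, 0 ≤ d i)
    (U U₀ : Matrix (Fin m) (Fin m) ℝ) (hU : Uᵀ * U = 1) (hU₀ : U₀ᵀ * U₀ = 1) :
    Matrix.trace (S * U * Matrix.diagonal d * Uᵀ)
        - 2 * Matrix.trace (Matrix.diagonal d * U₀ᵀ *
            (S - l • (1 : Matrix (Fin m) (Fin m) ℝ)) * U)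
      ≤ Matrix.trace (S * U₀ * Matrix.diagonal d * U₀ᵀ)
        - 2 * Matrix.trace (Matrix.diagonal d * U₀ᵀ *
            (S - l • (1 : Matrix (Fin m) (Fin m) ℝ)) * U₀) := by
  set A : Matrix (Fin m) (Fin m) ℝ := l • (1 : Matrix (Fin m) (Fin m) ℝ) - S with hAdef
  have hAsymm : Aᵀ = A := by
    simp [hAdef, Matrix.transpose_sub, hS.eq, Matrix.transpose_smul]
  set D : Matrix (Fin m) (Fin m) ℝ := Matrix.diagonal d with hDdef
  -- PSD of D * Mᵀ * A * M has nonneg trace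
  have key : ∀ M : Matrix (Fin m) (Fin m) ℝ,
      0 ≤ Matrix.trace (D * (Mᵀ * A * M)) := by
    intro M
    have hP : (Mᵀ * A * M).PosSemidef := by
      have := hl.conjTranspose_mul_mul_same M
      simpa using this
    have hdiag : ∀ i, 0 ≤ (Mᵀ * A * M) i i := fun i => by
      have := hP.dotProduct_mulVec_nonneg (Pi.single i 1)
      simpa [dotProduct, Matrix.mulVec, Pi.single_apply] using this
    rw [Matrix.trace]
    apply Finset.sum_nonneg
    intro i _
    simp only [Matrix.diag_apply, hDdef, Matrix.diagonal_mul]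
    exact mul_nonneg (hd i) (hdiag i)
  -- trace identity for orthonormal V
  have h1 : ∀ V : Matrix (Fin m) (Fin m) ℝ, Vᵀ * V = 1 →
      Matrix.trace (S * V * D * Vᵀ) = l * Matrix.trace D - Matrix.trace (D * Vᵀ * A * V) := by
    intro V hV
    have e1 : Matrix.trace (S * V * D * Vᵀ) = Matrix.trace (D * (Vᵀ * S * V)) := by
      rw [Matrix.trace_mul_comm (S * V * D) Vᵀ,
        show Vᵀ * (S * V * D) = (Vᵀ * S * V) * D by noncomm_ring,
        Matrix.trace_mul_comm]
    have e2 : Vᵀ * A * V = l • (1 : Matrix (Fin m) (Fin m) ℝ) - Vᵀ * S * V := by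
      simp [hAdef, Matrix.mul_sub, Matrix.sub_mul, Matrix.mul_smul, Matrix.smul_mul, hV]
    rw [e1]
    rw [show D * Vᵀ * A * V = D * (Vᵀ * A * V) by noncomm_ring, e2]
    simp [Matrix.mul_sub, Matrix.trace_sub, Matrix.trace_smul, smul_eq_mul, mul_comm]
  -- S - l•1 = -A
  have hSA : S - l • (1 : Matrix (Fin m) (Fin m) ℝ) = -A := by simp [hAdef]
  -- symmetry of cross term
  have hcross : Matrix.trace (D * Uᵀ * A * U₀) = Matrix.trace (D * U₀ᵀ * A * U) := by
    conv_lhs => rw [← Matrix.trace_transpose]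
    have ht : (D * Uᵀ * A * U₀)ᵀ = U₀ᵀ * A * U * D := by
      simp [Matrix.transpose_mul, hAsymm, hDdef, Matrix.diagonal_transpose, Matrix.mul_assoc]
    rw [ht, Matrix.trace_mul_comm,
      show D * (U₀ᵀ * A * U) = D * U₀ᵀ * A * U by noncomm_ring]
  -- expansion of key at M = U - U₀
  have hexp : Matrix.trace (D * ((U - U₀)ᵀ * A * (U - U₀)))
      = Matrix.trace (D * Uᵀ * A * U) + Matrix.trace (D * U₀ᵀ * A * U₀)
        - 2 * Matrix.trace (D * U₀ᵀ * A * U) := by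
    have : D * ((U - U₀)ᵀ * A * (U - U₀))
        = D * Uᵀ * A * U - D * Uᵀ * A * U₀ - D * U₀ᵀ * A * U + D * U₀ᵀ * A * U₀ := by
      simp only [Matrix.transpose_sub]
      noncomm_ring
    rw [this]
    simp only [Matrix.trace_add, Matrix.trace_sub]
    rw [hcross]; ring
  have hkey := key (U - U₀)
  rw [hexp] at hkey
  rw [h1 U hU, h1 U₀ hU₀, hSA]
  have e3 : Matrix.trace (D * U₀ᵀ * (-A) * U) = - Matrix.trace (D * U₀ᵀ * A * U) := by
    simp [Matrix.mul_neg, Matrix.neg_mul]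
  have e4 : Matrix.trace (D * U₀ᵀ * (-A) * U₀) = - Matrix.trace (D * U₀ᵀ * A * U₀) := by
    simp [Matrix.mul_neg, Matrix.neg_mul]
  rw [e3, e4]
  linarith
end

section
/- Let S be a real symmetric m×m matrix and let λ ∈ ℝ be such that λI_m − S is positive semidefinite (e.g., λ is the largest eigenvalue of S). Let U₀ be an m×m matrix with U₀ᵀU₀ = I_m and let Ξ₀ = diag(ξ₀) with ξ₀ ∈ (0,∞)^m. Define F = (S − λI_m)U₀Ξ₀⁻¹ and G = −Ξ₀⁻¹U₀ᵀ(S − λI_m)U₀Ξ₀⁻¹. Then for every m×m matrix U with UᵀU = I_m and every diagonal Ξ = diag(ξ) with ξ ∈ (0,∞)^m, Tr(S U Ξ⁻¹ Uᵀ) − 2·Tr(FᵀU) − Tr(GΞ) − λ·Tr(Ξ⁻¹) ≤ Tr(S U₀ Ξ₀⁻¹ U₀ᵀ) − 2·Tr(FᵀU₀) − Tr(GΞ₀) − λ·Tr(Ξ₀⁻¹); that is, up to an additive constant, the decoupled function 2·Tr(FᵀU) + Tr(GΞ) + λ·Tr(Ξ⁻¹) jointly majorizes Tr(S U Ξ⁻¹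 Uᵀ) over orthogonal U and positive diagonal Ξ, with equality at (U₀, Ξ₀). -/
open Matrix

lemma psd_trace_nonneg {n : ℕ} {A : Matrix (Fin n) (Fin n) ℝ} (hA : A.PosSemidef) :
    0 ≤ A.trace := by
  rw [Matrix.trace]
  refine Finset.sum_nonneg fun i _ => ?_
  exact hA.diag_nonneg

theorem stmt18 (m : ℕ) (S : Matrix (Fin m) (Fin m) ℝ) (hS : S.IsSymm)
    (l : ℝ) (hl : (l • (1 : Matrix (Fin m) (Fin m) ℝ) - S).PosSemidef)
    (U₀ : Matrix (Fin m) (Fin m) ℝ) (hU₀ : U₀ᵀ * U₀ = 1)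
    (ξ₀ : Fin m → ℝ) (hξ₀ : ∀ i, 0 < ξ₀ i)
    (F G : Matrix (Fin m) (Fin m) ℝ)
    (hF : F = (S - l • (1 : Matrix (Fin m) (Fin m) ℝ)) * U₀ *
        Matrix.diagonal (fun i => (ξ₀ i)⁻¹))
    (hG : G = -(Matrix.diagonal (fun i => (ξ₀ i)⁻¹) * U₀ᵀ *
        (S - l • (1 : Matrix (Fin m) (Fin m) ℝ)) * U₀ *
        Matrix.diagonal (fun i => (ξ₀ i)⁻¹)))
    (U : Matrix (Fin m) (Fin m) ℝ) (hU : Uᵀ * U = 1)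
    (ξ : Fin m → ℝ) (hξ : ∀ i, 0 < ξ i) :
    Matrix.trace (S * U * Matrix.diagonal (fun i => (ξ i)⁻¹) * Uᵀ)
        - 2 * Matrix.trace (Fᵀ * U) - Matrix.trace (G * Matrix.diagonal ξ)
        - l * Matrix.trace (Matrix.diagonal (fun i => (ξ i)⁻¹))
      ≤ Matrix.trace (S * U₀ * Matrix.diagonal (fun i => (ξ₀ i)⁻¹) * U₀ᵀ)
        - 2 * Matrix.trace (Fᵀ * U₀) - Matrix.trace (G * Matrix.diagonal ξ₀)
        - l * Matrix.trace (Matrix.diagonal (fun i => (ξ₀ i)⁻¹)) := by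
  subst hF hG
  set P : Matrix (Fin m) (Fin m) ℝ := l • (1 : Matrix (Fin m) (Fin m) ℝ) - S with hPdef
  set D : Matrix (Fin m) (Fin m) ℝ := Matrix.diagonal (fun i => (ξ i)⁻¹) with hDdef
  set D₀ : Matrix (Fin m) (Fin m) ℝ := Matrix.diagonal (fun i => (ξ₀ i)⁻¹) with hD₀def
  set Dh : Matrix (Fin m) (Fin m) ℝ := Matrix.diagonal (fun i => (Real.sqrt (ξ i))⁻¹) with hDhdef
  set Eh : Matrix (Fin m) (Fin m) ℝ := Matrix.diagonal (fun i => Real.sqrt (ξ i)) with hEhdef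
  have hA : S - l • (1 : Matrix (Fin m) (Fin m) ℝ) = -P := by rw [hPdef]; abel
  have hPt : Pᵀ = P := by
    rw [hPdef]; simp [transpose_sub, transpose_smul, transpose_one, hS.eq]
  have hD₀t : D₀ᵀ = D₀ := by rw [hD₀def, diagonal_transpose]
  have hDh2 : Dh * Dh = D := by
    rw [hDhdef, hDdef, diagonal_mul_diagonal]
    have : (fun i => (Real.sqrt (ξ i))⁻¹ * (Real.sqrt (ξ i))⁻¹) = fun i => (ξ i)⁻¹ := by
      funext i; rw [← mul_inv, Real.mul_self_sqrt (hξ i).le]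
    rw [this]
  have hEh2 : Eh * Eh = Matrix.diagonal ξ := by
    rw [hEhdef, diagonal_mul_diagonal]
    have : (fun i => Real.sqrt (ξ i) * Real.sqrt (ξ i)) = ξ := by
      funext i; exact Real.mul_self_sqrt (hξ i).le
    rw [this]
  have hEhDh : Eh * Dh = 1 := by
    rw [hEhdef, hDhdef, diagonal_mul_diagonal]
    have : (fun i => Real.sqrt (ξ i) * (Real.sqrt (ξ i))⁻¹) = fun _ => (1:ℝ) := by
      funext i; exact mul_inv_cancel₀ (Real.sqrt_ne_zero'.mpr (hξ i))
    rw [this, diagonal_one]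
  have hDhEh : Dh * Eh = 1 := by
    rw [hDhdef, hEhdef, diagonal_mul_diagonal]
    have : (fun i => (Real.sqrt (ξ i))⁻¹ * Real.sqrt (ξ i)) = fun _ => (1:ℝ) := by
      funext i; exact inv_mul_cancel₀ (Real.sqrt_ne_zero'.mpr (hξ i))
    rw [this, diagonal_one]
  have hD₀Ξ₀ : D₀ * Matrix.diagonal ξ₀ = 1 := by
    rw [hD₀def, diagonal_mul_diagonal]
    have : (fun i => (ξ₀ i)⁻¹ * ξ₀ i) = fun _ => (1:ℝ) := by
      funext i; exact inv_mul_cancel₀ (hξ₀ i).ne'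
    rw [this, diagonal_one]
  set M : Matrix (Fin m) (Fin m) ℝ := U * Dh - U₀ * D₀ * Eh with hMdef
  have hPSD : (Mᵀ * P * M).PosSemidef := by
    have := hl.conjTranspose_mul_mul_same M
    rwa [conjTranspose_eq_transpose_of_trivial] at this
  have hnn : 0 ≤ (Mᵀ * P * M).trace := psd_trace_nonneg hPSD
  have hexp : Mᵀ * P * M =
      Dh * Uᵀ * P * (U * Dh) - Dh * Uᵀ * P * (U₀ * D₀ * Eh)
      - Eh * D₀ * U₀ᵀ * P * (U * Dh) + Eh * D₀ * U₀ᵀ * P * (U₀ * D₀ * Eh) := by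
    rw [hMdef]
    simp only [transpose_sub, transpose_mul, hDhdef, hD₀def, hEhdef, diagonal_transpose]
    noncomm_ring
  have t1 : (Dh * Uᵀ * P * (U * Dh)).trace = (P * U * D * Uᵀ).trace := by
    rw [trace_mul_comm (Dh * Uᵀ * P) (U * Dh),
        show U * Dh * (Dh * Uᵀ * P) = U * (Dh * Dh) * Uᵀ * P by noncomm_ring, hDh2,
        trace_mul_comm (U * D * Uᵀ) P]
    congr 1; noncomm_ring
  have t2 : (Dh * Uᵀ * P * (U₀ * D₀ * Eh)).trace = (D₀ * U₀ᵀ * P * U).trace := by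
    rw [trace_mul_comm (Dh * Uᵀ * P) (U₀ * D₀ * Eh),
        show U₀ * D₀ * Eh * (Dh * Uᵀ * P) = U₀ * D₀ * (Eh * Dh) * (Uᵀ * P) by noncomm_ring,
        hEhDh, ← trace_transpose]
    simp only [transpose_mul, transpose_one, hD₀t, hPt, transpose_transpose]
    rw [show P * U * (1 * (D₀ * U₀ᵀ)) = P * U * (D₀ * U₀ᵀ) by noncomm_ring,
        trace_mul_comm (P * U) (D₀ * U₀ᵀ)]
    congr 1; noncomm_ring
  have t3 : (Eh * D₀ * U₀ᵀ * P * (U * Dh)).trace = (D₀ * U₀ᵀ * P * U).trace := by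
    rw [trace_mul_comm (Eh * D₀ * U₀ᵀ * P) (U * Dh),
        show U * Dh * (Eh * D₀ * U₀ᵀ * P) = U * ((Dh * Eh) * (D₀ * U₀ᵀ * P)) by noncomm_ring,
        hDhEh, Matrix.one_mul, trace_mul_comm U (D₀ * U₀ᵀ * P)]
  have t4 : (Eh * D₀ * U₀ᵀ * P * (U₀ * D₀ * Eh)).trace
      = (D₀ * U₀ᵀ * P * U₀ * D₀ * Matrix.diagonal ξ).trace := by
    rw [show Eh * D₀ * U₀ᵀ * P * (U₀ * D₀ * Eh)
        = Eh * (D₀ * U₀ᵀ * P * (U₀ * D₀ * Eh)) by noncomm_ring,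
        trace_mul_comm Eh,
        show D₀ * U₀ᵀ * P * (U₀ * D₀ * Eh) * Eh
        = D₀ * U₀ᵀ * P * U₀ * D₀ * (Eh * Eh) by noncomm_ring, hEh2]
  rw [hexp, trace_add, trace_sub, trace_sub, t1, t2, t3, t4] at hnn
  -- now rewrite the six goal traces
  have e1 : (S * U * D * Uᵀ).trace = l * D.trace - (P * U * D * Uᵀ).trace := by
    rw [show S * U * D * Uᵀ = (l • (1 : Matrix (Fin m) (Fin m) ℝ)) * U * D * Uᵀ
          - P * U * D * Uᵀ by rw [hPdef]; noncomm_ring,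
        trace_sub,
        show (l • (1 : Matrix (Fin m) (Fin m) ℝ)) * U * D * Uᵀ = l • (U * D * Uᵀ) by
          simp [Matrix.smul_mul],
        trace_smul, trace_mul_comm (U * D) Uᵀ, ← Matrix.mul_assoc, hU, Matrix.one_mul]
    rfl
  have e1' : (S * U₀ * D₀ * U₀ᵀ).trace = l * D₀.trace - (D₀ * U₀ᵀ * P * U₀).trace := by
    rw [show S * U₀ * D₀ * U₀ᵀ = (l • (1 : Matrix (Fin m) (Fin m) ℝ)) * U₀ * D₀ * U₀ᵀ
          - P * U₀ * D₀ * U₀ᵀ by rw [hPdef]; noncomm_ring,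
        trace_sub,
        show (l • (1 : Matrix (Fin m) (Fin m) ℝ)) * U₀ * D₀ * U₀ᵀ = l • (U₀ * D₀ * U₀ᵀ) by
          simp [Matrix.smul_mul],
        trace_smul, trace_mul_comm (U₀ * D₀) U₀ᵀ, ← Matrix.mul_assoc, hU₀, Matrix.one_mul,
        show P * U₀ * D₀ * U₀ᵀ = P * (U₀ * (D₀ * U₀ᵀ)) by noncomm_ring,
        trace_mul_comm P, show U₀ * (D₀ * U₀ᵀ) * P = U₀ * (D₀ * U₀ᵀ * P) by noncomm_ring,
        trace_mul_comm U₀]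
    rfl
  have e2 : (((S - l • (1 : Matrix (Fin m) (Fin m) ℝ)) * U₀ * D₀)ᵀ * U).trace
      = -(D₀ * U₀ᵀ * P * U).trace := by
    rw [hA]
    simp only [transpose_mul, transpose_neg, hPt, hD₀t, Matrix.neg_mul, Matrix.mul_neg,
      trace_neg, neg_inj]
    congr 1; noncomm_ring
  have e2' : (((S - l • (1 : Matrix (Fin m) (Fin m) ℝ)) * U₀ * D₀)ᵀ * U₀).trace
      = -(D₀ * U₀ᵀ * P * U₀).trace := by
    rw [hA]
    simp only [transpose_mul, transpose_neg, hPt, hD₀t, Matrix.neg_mul, Matrix.mul_neg,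
      trace_neg, neg_inj]
    congr 1; noncomm_ring
  have e3 : ((-(D₀ * U₀ᵀ * (S - l • (1 : Matrix (Fin m) (Fin m) ℝ)) * U₀ * D₀))
        * Matrix.diagonal ξ).trace = (D₀ * U₀ᵀ * P * U₀ * D₀ * Matrix.diagonal ξ).trace := by
    rw [hA]; congr 1; noncomm_ring
  have e3' : ((-(D₀ * U₀ᵀ * (S - l • (1 : Matrix (Fin m) (Fin m) ℝ)) * U₀ * D₀))
        * Matrix.diagonal ξ₀).trace = (D₀ * U₀ᵀ * P * U₀).trace := by
    rw [hA, show -(D₀ * U₀ᵀ * (-P) * U₀ * D₀) * Matrix.diagonal ξ₀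
        = D₀ * U₀ᵀ * P * U₀ * (D₀ * Matrix.diagonal ξ₀) by noncomm_ring, hD₀Ξ₀,
        Matrix.mul_one]
  rw [e1, e1', e2, e2', e3, e3']
  linarith
end
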